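/- For every real θ > 1, the series ∑_{n=2}^{∞} (log n) · n^{−θ} converges and satisfies ∑_{n=2}^{∞} (log n) · n^{−θ} < (log 2 + 1)/(θ−1)² + log 2. -/

import Mathlib

open Real Finset Set

noncomputable def stmt17F (θ x : ℝ) : ℝ :=
  x ^ (1 - θ) * ((θ - 1) * Real.log x + 1) / (θ - 1) ^ 2

lemma stmt17_hasDerivAt_F {θ : ℝ} (hθ : 1 < θ) {x : ℝ} (hx : 0 < x) :
    HasDerivAt (stmt17F θ) (-(Real.log x * x ^ (-θ))) x := by
  have hx0 : x ≠ 0 := hx.ne'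
  have h1 : HasDerivAt (fun y : ℝ => y ^ (1 - θ)) ((1 - θ) * x ^ (1 - θ - 1)) x :=
    Real.hasDerivAt_rpow_const (Or.inl hx0)
  have h2 : HasDerivAt (fun y : ℝ => (θ - 1) * Real.log y + 1) ((θ - 1) * x⁻¹) x :=
    ((Real.hasDerivAt_log hx0).const_mul (θ - 1)).add_const 1
  have h3 := (h1.mul h2).div_const ((θ - 1) ^ 2)
  have e0 : (1 : ℝ) - θ - 1 = -θ := by ring
  rw [e0] at h3
  have e2 : x ^ (1 - θ) = x * x ^ (-θ) := by
    rw [show (1 : ℝ) - θ = 1 + -θ by ring, Real.rpow_add hx, Real.rpow_one]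
  have ht : θ - 1 ≠ 0 := by linarith
  refine HasDerivAt.congr_deriv (f := stmt17F θ) h3 ?_
  rw [e2]
  field_simp
  ring

lemma stmt17_log3 : 1 < Real.log 3 := by
  rw [Real.lt_log_iff_exp_lt (by norm_num : (0:ℝ) < 3)]
  calc Real.exp 1 < 2.7182818286 := Real.exp_one_lt_d9
    _ < 3 := by norm_num

lemma stmt17_anti {θ : ℝ} (hθ : 1 < θ) :
    AntitoneOn (fun x : ℝ => Real.log x * x ^ (-θ)) (Ici 3) := by
  have hder : ∀ x : ℝ, 0 < x →
      HasDerivAt (fun x : ℝ => Real.log x * x ^ (-θ))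
        (x⁻¹ * x ^ (-θ) + Real.log x * (-θ * x ^ (-θ - 1))) x := fun x hx =>
    (Real.hasDerivAt_log hx.ne').mul (Real.hasDerivAt_rpow_const (Or.inl hx.ne'))
  have hpos : ∀ x : ℝ, x ∈ Ici (3:ℝ) → (0:ℝ) < x := fun x hx => by
    simp only [Set.mem_Ici] at hx; linarith
  apply antitoneOn_of_deriv_nonpos (convex_Ici 3)
  · exact fun x hx => ((hder x (hpos x hx)).continuousAt).continuousWithinAt
  · rw [interior_Ici]
    exact fun x hx => ((hder x (by have : (3:ℝ) < x := hx; linarith)).differentiableAt).differentiableWithinAt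
  · rw [interior_Ici]
    intro x hx
    have hx3 : (3:ℝ) < x := hx
    have hx0 : (0:ℝ) < x := by linarith
    rw [(hder x hx0).deriv]
    have hlog : 1 < Real.log x := by
      rw [Real.lt_log_iff_exp_lt hx0]
      calc Real.exp 1 < 2.7182818286 := Real.exp_one_lt_d9
        _ < x := by linarith
    have e1 : x ^ (-θ - 1) = x ^ (-θ) * x⁻¹ := by
      rw [show -θ - 1 = -θ + (-1) by ring, Real.rpow_add hx0, Real.rpow_neg_one]
    rw [e1]
    have h1 : (0:ℝ) ≤ x ^ (-θ) * x⁻¹ := by positivity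
    have h2 : 1 - θ * Real.log x ≤ 0 := by nlinarith
    nlinarith [mul_nonneg h1 (by linarith : (0:ℝ) ≤ θ * Real.log x - 1)]

lemma stmt17_step {θ : ℝ} (hθ : 1 < θ) {x : ℝ} (hx : 3 ≤ x) :
    Real.log (x + 1) * (x + 1) ^ (-θ) ≤ stmt17F θ x - stmt17F θ (x + 1) := by
  have hlt : x < x + 1 := by linarith
  obtain ⟨c, hc, hceq⟩ := exists_hasDerivAt_eq_slope (stmt17F θ)
    (fun y => -(Real.log y * y ^ (-θ))) hlt
    (fun y hy => (stmt17_hasDerivAt_F hθ (by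
      have := hy.1; simp only [Set.mem_Icc] at hy; linarith [hy.1])).continuousAt.continuousWithinAt)
    (fun y hy => stmt17_hasDerivAt_F hθ (by have := hy.1; linarith))
  have h1 : x + 1 - x = 1 := by ring
  rw [h1, div_one] at hceq
  have h2 : stmt17F θ x - stmt17F θ (x + 1) = Real.log c * c ^ (-θ) := by linarith
  rw [h2]
  exact stmt17_anti hθ (by simp only [Set.mem_Ici]; linarith [hc.1] : c ∈ Ici (3:ℝ))
    (by simp only [Set.mem_Ici]; linarith : x + 1 ∈ Ici (3:ℝ)) hc.2.le

lemma stmt17_F_nonneg {θ : ℝ} (hθ : 1 < θ) {x : ℝ} (hx : 1 ≤ x) : 0 ≤ stmt17F θ x := by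
  unfold stmt17F
  have hl : 0 ≤ Real.log x := Real.log_nonneg hx
  have hx0 : (0:ℝ) < x := by linarith
  have h1 : (0:ℝ) ≤ x ^ (1 - θ) := (Real.rpow_pos_of_pos hx0 _).le
  have h2 : (0:ℝ) ≤ (θ - 1) * Real.log x + 1 := by nlinarith
  positivity

lemma stmt17_tele {θ : ℝ} (hθ : 1 < θ) (M : ℕ) :
    ∑ n ∈ range M, Real.log ((n : ℝ) + 4) * ((n : ℝ) + 4) ^ (-θ) ≤
      stmt17F θ 3 - stmt17F θ ((M : ℝ) + 3) := by
  induction M with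
  | zero => simp
  | succ M ih =>
    rw [Finset.sum_range_succ]
    have hstep := stmt17_step hθ (x := (M : ℝ) + 3) (by linarith [Nat.cast_nonneg (α := ℝ) M])
    have e : ((M : ℝ) + 3) + 1 = ((M : ℕ) : ℝ) + 4 := by push_cast; ring
    rw [e] at hstep

    push_cast at ih hstep
    have e4 : (M : ℝ) + 1 + 3 = (M : ℝ) + 4 := by ring
    push_cast
    rw [e4]
    linarith

theorem stmt_17 (θ : ℝ) (hθ : 1 < θ) :
    Summable (fun n : ℕ => Real.log ((n : ℝ) + 2) * ((n : ℝ) + 2) ^ (-θ)) ∧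
      ∑' n : ℕ, Real.log ((n : ℝ) + 2) * ((n : ℝ) + 2) ^ (-θ) <
        (Real.log 2 + 1) / (θ - 1) ^ 2 + Real.log 2 := by
  set g : ℕ → ℝ := fun n => Real.log ((n : ℝ) + 2) * ((n : ℝ) + 2) ^ (-θ) with hg
  have hnonneg : ∀ n, 0 ≤ g n := by
    intro n
    have h1 : (1:ℝ) ≤ (n : ℝ) + 2 := by linarith [Nat.cast_nonneg (α := ℝ) n]
    have := Real.log_nonneg h1
    positivity
  set B : ℝ := Real.log 2 * 2 ^ (-θ) + Real.log 3 * 3 ^ (-θ) + stmt17F θ 3 with hB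
  have hbound : ∀ N, ∑ n ∈ range N, g n ≤ B := by
    intro N
    have hmono : ∑ n ∈ range N, g n ≤ ∑ n ∈ range (N + 2), g n :=
      Finset.sum_le_sum_of_subset_of_nonneg (Finset.range_subset_range.2 (by omega))
        (fun i _ _ => hnonneg i)
    have hsplit : ∑ n ∈ range (N + 2), g n =
        (∑ n ∈ range N, g (n + 2)) + g 1 + g 0 := by
      rw [Finset.sum_range_succ' (fun n => g n) (N + 1),
        Finset.sum_range_succ' (fun n => g (n + 1)) N]
    have htail : ∑ n ∈ range N, g (n + 2) ≤ stmt17F θ 3 := by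
      have h1 : ∀ n : ℕ, g (n + 2) = Real.log ((n : ℝ) + 4) * ((n : ℝ) + 4) ^ (-θ) := by
        intro n; simp only [hg]; push_cast; ring_nf
      calc ∑ n ∈ range N, g (n + 2)
          = ∑ n ∈ range N, Real.log ((n : ℝ) + 4) * ((n : ℝ) + 4) ^ (-θ) :=
            Finset.sum_congr rfl (fun n _ => h1 n)
        _ ≤ stmt17F θ 3 - stmt17F θ ((N : ℝ) + 3) := stmt17_tele hθ N
        _ ≤ stmt17F θ 3 := by
            have := stmt17_F_nonneg hθ (x := (N : ℝ) + 3) (by linarith [Nat.cast_nonneg (α := ℝ) N]); linarith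
    have hg0 : g 0 = Real.log 2 * 2 ^ (-θ) := by simp [hg]
    have hg1 : g 1 = Real.log 3 * 3 ^ (-θ) := by norm_num [hg]
    rw [hsplit, hg0, hg1] at hmono
    rw [hB]
    linarith
  have hsum : Summable g := summable_of_sum_range_le hnonneg hbound
  refine ⟨hsum, lt_of_le_of_lt (Real.tsum_le_of_sum_range_le hnonneg hbound) ?_⟩
  -- final numeric bound : B < (log 2 + 1)/(θ-1)^2 + log 2
  have ht : (0:ℝ) < θ - 1 := by linarith
  have ht2 : (0:ℝ) < (θ - 1) ^ 2 := by positivity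
  have hlog2 : (0:ℝ) < Real.log 2 := Real.log_pos one_lt_two
  have hL : 1 < Real.log 3 := stmt17_log3
  have hfirst : Real.log 2 * 2 ^ (-θ) < Real.log 2 := by
    have h2 : (2:ℝ) ^ (-θ) < 1 :=
      Real.rpow_lt_one_of_one_lt_of_neg one_lt_two (by linarith)
    nlinarith [Real.rpow_pos_of_pos (by norm_num : (0:ℝ) < 2) (-θ)]
  have hmain : Real.log 3 * 3 ^ (-θ) + stmt17F θ 3 ≤ (Real.log 2 + 1) / (θ - 1) ^ 2 := by
    set t := θ - 1 with htdef
    set L := Real.log 3 with hLdef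
    set E : ℝ := 3 ^ (-t) with hEdef
    have hEpos : (0:ℝ) < E := Real.rpow_pos_of_pos (by norm_num) _
    have h3θ : (3:ℝ) ^ (-θ) = E * 3⁻¹ := by
      rw [hEdef, show -θ = -t + (-1) by rw [htdef]; ring,
        Real.rpow_add (by norm_num : (0:ℝ) < 3), Real.rpow_neg_one]
    have h31 : (3:ℝ) ^ (1 - θ) = E := by
      rw [hEdef, show (1:ℝ) - θ = -t by rw [htdef]; ring]
    have hA : t ^ 2 * L / 3 + t * L + 1 ≤ (3:ℝ) ^ t := by
      have h3t : (3:ℝ) ^ t = Real.exp (L * t) := by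
        rw [Real.rpow_def_of_pos (by norm_num : (0:ℝ) < 3)]
      have hexp : 1 + L * t + (L * t) ^ 2 / 2 ≤ Real.exp (L * t) := by
        have := Real.sum_le_exp_of_nonneg
          (by nlinarith : (0:ℝ) ≤ L * t) 3
        simp [Finset.sum_range_succ] at this
        nlinarith [this]
      rw [h3t]
      nlinarith [sq_nonneg t, mul_nonneg (sq_nonneg t) (by linarith : (0:ℝ) ≤ L)]
    have hkey : E * (t ^ 2 * L / 3 + t * L + 1) ≤ 1 := by
      have hE3t : E * (3:ℝ) ^ t = 1 := by
        rw [hEdef, ← Real.rpow_add (by norm_num : (0:ℝ) < 3)]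
        norm_num
      calc E * (t ^ 2 * L / 3 + t * L + 1) ≤ E * (3:ℝ) ^ t :=
            mul_le_mul_of_nonneg_left hA hEpos.le
        _ = 1 := hE3t
    rw [le_div_iff₀ ht2]
    unfold stmt17F
    rw [h3θ, h31]
    have hlog3 : Real.log 3 = L := rfl
    have ht0 : t ≠ 0 := ht.ne'
    have hexpand : (L * (E * 3⁻¹) + E * ((θ - 1) * Real.log 3 + 1) / (θ - 1) ^ 2) * (θ - 1) ^ 2
        = E * (t ^ 2 * L / 3 + t * L + 1) := by
      rw [← hlog3, ← htdef]
      field_simp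
      ring
    rw [hexpand]
    linarith
  have hF3 : stmt17F θ 3 = stmt17F θ 3 := rfl
  rw [hB]
  linarith
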